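/- arXiv:1311.0331 — 2 statements merged into one kernel-verified Lean document; each statement's English description precedes it below -/
import Mathlib

section
/- The family 𝒫_{<ω}(ℕ) of finite subsets of ℕ is Wadge hard both for Σ⁰₂ of the Cantor space and for the closed subsets of 𝒫(ℕ): (1) every set in Σ⁰₂ of the Cantor space 2^ω (the space ℕ → Bool with the product topology) is of the form f⁻¹(𝒫_{<ω}(ℕ)) for some continuous f : 2^ω → 𝒫(ℕ); (2) every Scott-closed family 𝒴 ⊆ 𝒫(ℕ) is of the form g⁻¹(𝒫_{<ω}(ℕ)) for some continuous g : 𝒫(ℕ) → 𝒫(ℕ). -/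
open Topology

/-- The Scott topology on 𝒫(ℕ), generated by the basic open sets
`B_A = {X : A ⊆ X}` for finite `A ⊆ ℕ`. -/
def ScottPN : TopologicalSpace (Set ℕ) :=
  TopologicalSpace.generateFrom
    {O : Set (Set ℕ) | ∃ A : Set ℕ, A.Finite ∧ O = {X : Set ℕ | A ⊆ X}}

/-- An ordinal is even if its canonical decomposition `λ + n`
(`λ` zero or a limit, `n < ω`) has `n` even. -/
def OrdEven (o : Ordinal) : Prop :=
  ∃ (l : Ordinal) (n : ℕ), (l = 0 ∨ Order.IsSuccLimit l) ∧ o = l + 2 * n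

/-- Two ordinals have the same parity. -/
def SameParity (a b : Ordinal) : Prop := OrdEven a ↔ OrdEven b

/-- The Hausdorff difference operation `D_α`. -/
def DOp {E : Type*} (α : Ordinal) (U : Ordinal → Set E) : Set E :=
  ⋃ β ∈ {β : Ordinal | β < α ∧ ¬ SameParity β α}, (U β \ ⋃ γ ∈ Set.Iio β, U γ)

/-- Membership in the Hausdorff difference class `D_α(E)`. -/
def MemD {E : Type*} (t : TopologicalSpace E) (α : Ordinal) (A : Set E) : Prop :=
  ∃ U : Ordinal → Set E, (∀ β < α, IsOpen[t] (U β)) ∧ A = DOp α U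
/-- Membership in `Σ⁰₂(E)`: countable unions of differences of open sets. -/
def MemSigma2 {E : Type*} (t : TopologicalSpace E) (A : Set E) : Prop :=
  ∃ U V : ℕ → Set E, (∀ n, IsOpen[t] (U n)) ∧ (∀ n, IsOpen[t] (V n)) ∧
    A = ⋃ n, U n \ V n

instance : Filter.IsCountablyGenerated (uniformity Bool) :=
  @Filter.isCountablyGenerated_principal _ (SetRel.id : SetRel Bool Bool)

/-- The family of finite subsets of `ℕ` is Wadge hard for `Σ⁰₂` of the Cantor
space `2^ω = (ℕ → Bool)` and for the closed subsets of `𝒫(ℕ)`. -/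
theorem finite_sets_hard_for_cantor_sigma2_and_closed :
    (∀ A : Set (ℕ → Bool), MemSigma2 Pi.topologicalSpace A →
      ∃ f : (ℕ → Bool) → Set ℕ, Continuous[Pi.topologicalSpace, ScottPN] f ∧
        A = f ⁻¹' {X : Set ℕ | X.Finite}) ∧
    (∀ Y : Set (Set ℕ), IsClosed[ScottPN] Y →
      ∃ g : Set ℕ → Set ℕ, Continuous[ScottPN, ScottPN] g ∧
        Y = g ⁻¹' {X : Set ℕ | X.Finite}) := by
  constructor
  · rintro A ⟨U, V, hU, hV, hA⟩
    have hGδ : IsGδ Aᶜ := by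
      rw [hA, Set.compl_iUnion]
      refine IsGδ.iInter fun n => ?_
      rw [Set.diff_eq, Set.compl_inter, compl_compl]
      exact IsGδ.union ((hU n).isClosed_compl.isGδ) ((hV n).isGδ)
    obtain ⟨O, hOopen, hOeq⟩ := hGδ.eq_iInter_nat
    set O' : ℕ → Set (ℕ → Bool) := fun k => ⋂ i ∈ Finset.range (k + 1), O i with hO'
    have hO'open : ∀ k, IsOpen (O' k) := fun k =>
      isOpen_biInter_finset fun i _ => hOopen i
    refine ⟨fun x => {k | x ∈ O' k}, ?_, ?_⟩
    · rw [ScottPN]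
      refine continuous_generateFrom_iff.mpr ?_
      rintro s ⟨B, hBfin, rfl⟩
      have : (fun x => {k | x ∈ O' k}) ⁻¹' {X : Set ℕ | B ⊆ X}
          = ⋂ k ∈ B, O' k := by
        ext x
        simp [Set.subset_def, Set.mem_iInter]
      rw [this]
      exact hBfin.isOpen_biInter fun k _ => hO'open k
    · ext x
      simp only [Set.mem_preimage, Set.mem_setOf_eq]
      constructor
      · intro hx
        by_contra hinf
        have hxc : x ∈ Aᶜ := by
          rw [hOeq]
          refine Set.mem_iInter.mpr fun n => ?_
          rcases Set.Infinite.exists_gt (show Set.Infinite {k | x ∈ O' k} from hinf) n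
            with ⟨k, hk, hnk⟩
          exact Set.mem_iInter₂.mp hk n (by simp only [Finset.mem_range]; omega)
        exact hxc hx
      · intro hfin
        by_contra hx
        have hxc : x ∈ Aᶜ := hx
        rw [hOeq] at hxc
        have : {k | x ∈ O' k} = Set.univ := by
          ext k
          simp only [Set.mem_setOf_eq, Set.mem_univ, iff_true]
          exact Set.mem_iInter.mpr fun i => Set.mem_iInter.mpr fun _ =>
            Set.mem_iInter.mp hxc i
        rw [this] at hfin
        exact Set.infinite_univ hfin
  · intro Y hY
    refine ⟨fun X => {n : ℕ | X ∉ Y}, ?_, ?_⟩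
    · rw [ScottPN]
      refine continuous_generateFrom_iff.mpr ?_
      rintro s ⟨B, hBfin, rfl⟩
      rcases eq_or_ne B ∅ with rfl | hBne
      · have : (fun X => {n : ℕ | X ∉ Y}) ⁻¹' {X : Set ℕ | (∅ : Set ℕ) ⊆ X}
            = Set.univ := by
          ext X; simp
        rw [this]
        exact @isOpen_univ _ (TopologicalSpace.generateFrom _)
      · obtain ⟨b, hb⟩ := Set.nonempty_iff_ne_empty.mpr hBne
        have : (fun X => {n : ℕ | X ∉ Y}) ⁻¹' {X : Set ℕ | B ⊆ X} = Yᶜ := by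
          ext X
          simp only [Set.mem_preimage, Set.mem_setOf_eq, Set.mem_compl_iff]
          constructor
          · intro h; exact h hb
          · intro h n _; exact h
        rw [this]
        exact hY.isOpen_compl
    · ext X
      simp only [Set.mem_preimage, Set.mem_setOf_eq]
      constructor
      · intro hX
        have : {n : ℕ | X ∉ Y} = ∅ := by ext n; simp [hX]
        rw [this]; exact Set.finite_empty
      · intro hfin
        by_contra hX
        have : {n : ℕ | X ∉ Y} = Set.univ := by ext n; simp [hX]
        rw [this] at hfin
        exact Set.infinite_univ hfin
end

section
/- Limits on reducibility to the family of finite sets in the Scott domain: (1) if 𝒪 ⊆ 𝒫(ℕ) is a nonempty Scott-open family with 𝒪 ≠ 𝒫(ℕ), then there is no continuous f : 𝒫(ℕ) → 𝒫(ℕ) with 𝒪 = f⁻¹(𝒫_{<ω}(ℕ)); (2) no subfamily 𝒳 ⊆ 𝒫_{<ω}(ℕ) is Wadge hard for Σ⁰₂(𝒫(ℕ)), i.e., for every 𝒳 ⊆ 𝒫_{<ω}(ℕ) there exists a family in Σ⁰₂(𝒫(ℕ)) that is not Wadge reducible to 𝒳. -/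
open Topology

/-- Wadge reducibility between families of subsets of ℕ (Scott topology). -/
def WadgeLe (A B : Set (Set ℕ)) : Prop :=
  ∃ f : Set ℕ → Set ℕ, Continuous[ScottPN, ScottPN] f ∧ A = f ⁻¹' B

/-! ### Auxiliary lemmas -/

private lemma gen_open_upward {W : Set (Set ℕ)}
    (hW : TopologicalSpace.GenerateOpen
      {O : Set (Set ℕ) | ∃ A : Set ℕ, A.Finite ∧ O = {X : Set ℕ | A ⊆ X}} W) :
    ∀ X Y : Set ℕ, X ∈ W → X ⊆ Y → Y ∈ W := by
  induction hW with
  | basic O hO =>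
    obtain ⟨A, -, rfl⟩ := hO
    exact fun X Y hX hXY => hX.trans hXY
  | univ => intro X Y _ _; trivial
  | inter O₁ O₂ h1 h2 ih1 ih2 =>
    intro X Y hX hXY
    exact ⟨ih1 X Y hX.1 hXY, ih2 X Y hX.2 hXY⟩
  | sUnion S hS ih =>
    rintro X Y ⟨O, hO, hXO⟩ hXY
    exact ⟨O, hO, ih O hO X Y hXO hXY⟩

private lemma scott_open_upward {W : Set (Set ℕ)} (hW : IsOpen[ScottPN] W) :
    ∀ X Y : Set ℕ, X ∈ W → X ⊆ Y → Y ∈ W :=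
  gen_open_upward hW

private lemma scott_basic_open (a : ℕ) : IsOpen[ScottPN] {X : Set ℕ | a ∈ X} := by
  show TopologicalSpace.GenerateOpen _ _
  apply TopologicalSpace.GenerateOpen.basic
  exact ⟨{a}, Set.finite_singleton a, by ext X; simp⟩

private lemma scott_mono {f : Set ℕ → Set ℕ} (hf : Continuous[ScottPN, ScottPN] f) :
    ∀ X Y : Set ℕ, X ⊆ Y → f X ⊆ f Y := by
  intro X Y hXY a ha
  have hop : IsOpen[ScottPN] (f ⁻¹' {Z : Set ℕ | a ∈ Z}) :=
    @Continuous.isOpen_preimage _ _ ScottPN ScottPN f hf _ (scott_basic_open a)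
  exact scott_open_upward hop X Y ha hXY

private lemma finset_subset_chain (F : Finset ℕ) (g : ℕ → Set ℕ)
    (hg : Monotone g) (h : ∀ x ∈ F, x ∈ ⋃ n, g n) : ∃ n, ∀ x ∈ F, x ∈ g n := by
  induction F using Finset.induction_on with
  | empty => exact ⟨0, by simp⟩
  | @insert x s hxs ih =>
    obtain ⟨m, hm⟩ := Set.mem_iUnion.1 (h x (Finset.mem_insert_self x s))
    obtain ⟨n, hn⟩ := ih fun y hy => h y (Finset.mem_insert_of_mem hy)
    refine ⟨max m n, fun y hy => ?_⟩
    rcases Finset.mem_insert.1 hy with rfl | hy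
    · exact hg (le_max_left m n) hm
    · exact hg (le_max_right m n) (hn y hy)

private lemma finite_subset_chain {F : Set ℕ} (hF : F.Finite) (g : ℕ → Set ℕ)
    (hg : Monotone g) : F ⊆ (⋃ n, g n) → ∃ n, F ⊆ g n := by
  intro h
  obtain ⟨n, hn⟩ := finset_subset_chain hF.toFinset g hg
    (fun x hx => h (hF.mem_toFinset.1 hx))
  exact ⟨n, fun x hx => hn x (hF.mem_toFinset.2 hx)⟩

private lemma gen_open_chain {W : Set (Set ℕ)}
    (hW : TopologicalSpace.GenerateOpen
      {O : Set (Set ℕ) | ∃ A : Set ℕ, A.Finite ∧ O = {X : Set ℕ | A ⊆ X}} W) :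
    ∀ g : ℕ → Set ℕ, Monotone g → (⋃ n, g n) ∈ W → ∃ n, g n ∈ W := by
  induction hW with
  | basic O hO =>
    obtain ⟨A, hA, rfl⟩ := hO
    exact fun g hg h => finite_subset_chain hA g hg h
  | univ => exact fun g _ _ => ⟨0, trivial⟩
  | inter O₁ O₂ h1 h2 ih1 ih2 =>
    intro g hg h
    obtain ⟨m, hm⟩ := ih1 g hg h.1
    obtain ⟨n, hn⟩ := ih2 g hg h.2
    exact ⟨max m n, gen_open_upward h1 _ _ hm (hg (le_max_left m n)),
      gen_open_upward h2 _ _ hn (hg (le_max_right m n))⟩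
  | sUnion S hS ih =>
    rintro g hg ⟨O, hO, hmem⟩
    obtain ⟨n, hn⟩ := ih O hO g hg hmem
    exact ⟨n, O, hO, hn⟩

/-- A Scott-continuous function preserves unions of increasing chains (⊆ direction). -/
private lemma scott_chain_sup {f : Set ℕ → Set ℕ} (hf : Continuous[ScottPN, ScottPN] f)
    (g : ℕ → Set ℕ) (hg : Monotone g) :
    f (⋃ n, g n) ⊆ ⋃ n, f (g n) := by
  intro a ha
  have hop : IsOpen[ScottPN] (f ⁻¹' {Z : Set ℕ | a ∈ Z}) :=
    @Continuous.isOpen_preimage _ _ ScottPN ScottPN f hf _ (scott_basic_open a)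
  obtain ⟨n, hn⟩ := gen_open_chain hop g hg ha
  exact Set.mem_iUnion.2 ⟨n, hn⟩

/-- Limits on reducibility to the family of finite sets in `𝒫(ℕ)`:
no nonempty proper Scott-open family reduces to it, and no subfamily of it is
Wadge hard for `Σ⁰₂(𝒫(ℕ))`. -/
theorem finite_sets_reduction_limits :
    (∀ O : Set (Set ℕ), IsOpen[ScottPN] O → O.Nonempty → O ≠ Set.univ →
      ¬ ∃ f : Set ℕ → Set ℕ, Continuous[ScottPN, ScottPN] f ∧
          O = f ⁻¹' {X : Set ℕ | X.Finite}) ∧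
    (∀ C : Set (Set ℕ), C ⊆ {X : Set ℕ | X.Finite} →
      ∃ A : Set (Set ℕ), MemSigma2 ScottPN A ∧ ¬ WadgeLe A C) := by
  constructor
  · -- Part 1
    rintro O hO ⟨X, hX⟩ hOne ⟨f, hf, hOf⟩
    -- univ ∈ O, so f univ is finite
    have huniv : (Set.univ : Set ℕ) ∈ O := scott_open_upward hO X _ hX (Set.subset_univ X)
    have hfu : (f Set.univ).Finite := by
      have := hOf ▸ huniv; exact this
    obtain ⟨Y, hY⟩ := Set.ne_univ_iff_exists_notMem O |>.1 hOne
    have hfY : ¬ (f Y).Finite := by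
      intro h; exact hY (hOf ▸ (h : f Y ∈ {X : Set ℕ | X.Finite}))
    exact hfY (hfu.subset (scott_mono hf Y Set.univ (Set.subset_univ Y)))
  · -- Part 2
    intro C hC
    -- the Σ⁰₂ witness
    set U : ℕ → Set (Set ℕ) := fun n =>
      match n with
      | 0 => {X : Set ℕ | 1 ∈ X}
      | m + 1 => {X : Set ℕ | 4 * m ∈ X} with hU
    set V : ℕ → Set (Set ℕ) := fun n =>
      match n with
      | 0 => (∅ : Set (Set ℕ))
      | m + 1 => {X : Set ℕ | 4 * m + 2 ∈ X} with hV
    refine ⟨⋃ n, U n \ V n, ⟨U, V, ?_, ?_, rfl⟩, ?_⟩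
    · intro n; match n with
      | 0 => exact scott_basic_open 1
      | m + 1 => exact scott_basic_open (4 * m)
    · intro n; match n with
      | 0 => exact @isOpen_empty _ ScottPN
      | m + 1 => exact scott_basic_open (4 * m + 2)
    · rintro ⟨f, hf, hA⟩
      -- membership characterization
      have hmem : ∀ X : Set ℕ, X ∈ (⋃ n, U n \ V n) ↔
          (1 ∈ X ∨ ∃ m, 4 * m ∈ X ∧ 4 * m + 2 ∉ X) := by
        intro X
        simp only [Set.mem_iUnion, Set.mem_diff]
        constructor
        · rintro ⟨n, h1, h2⟩
          match n with
          | 0 => exact Or.inl h1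
          | m + 1 => exact Or.inr ⟨m, h1, h2⟩
        · rintro (h | ⟨m, h1, h2⟩)
          · exact ⟨0, h, by simp [hV]⟩
          · exact ⟨m + 1, h1, h2⟩
      -- the chain of initial segments of the evens
      set E : ℕ → Set ℕ := fun n => {k | ∃ i, i < n ∧ k = 2 * i} with hE
      have hEmono : Monotone E := by
        intro m n hmn k
        rintro ⟨i, hi, rfl⟩
        exact ⟨i, lt_of_lt_of_le hi hmn, rfl⟩
      have hEa : ∀ n, E n ∈ (⋃ n, U n \ V n) ↔ Odd n := by
        intro n
        rw [hmem]
        constructor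
        · rintro (⟨i, hi, h⟩ | ⟨m, ⟨i, hi, h1⟩, h2⟩)
          · omega
          · have : ¬ ∃ j, j < n ∧ 4 * m + 2 = 2 * j := h2
            refine ⟨m, ?_⟩
            by_contra hne
            exact this ⟨2 * m + 1, by omega, by omega⟩
        · rintro ⟨m, rfl⟩
          refine Or.inr ⟨m, ⟨2 * m, by omega, by omega⟩, ?_⟩
          rintro ⟨j, hj, hjeq⟩
          omega
      -- membership flips at each step, so f (E n) strictly increases
      have hstep : ∀ n, f (E n) ⊂ f (E (n + 1)) := by
        intro n
        have hsub : f (E n) ⊆ f (E (n + 1)) := scott_mono hf _ _ (hEmono (Nat.le_succ n))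
        refine ⟨hsub, fun hrev => ?_⟩
        have heq : f (E n) = f (E (n + 1)) := le_antisymm hsub hrev
        have h1 : (E n ∈ (⋃ n, U n \ V n)) ↔ f (E n) ∈ C := by
          rw [hA]; exact Iff.rfl
        have h2 : (E (n + 1) ∈ (⋃ n, U n \ V n)) ↔ f (E (n + 1)) ∈ C := by
          rw [hA]; exact Iff.rfl
        have hiff : Odd n ↔ Odd (n + 1) :=
          ((hEa n).symm.trans h1).trans (heq ▸ (((hEa (n + 1)).symm.trans h2).symm))
        rw [Nat.odd_add_one] at hiff
        exact iff_not_self hiff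
      -- the witness point Y
      set Y : Set ℕ := (⋃ n, E n) ∪ {1} with hY
      have hYmem : Y ∈ (⋃ n, U n \ V n) := (hmem Y).2 (Or.inl (Or.inr rfl))
      have hEY : ∀ n, f (E n) ⊆ f Y := fun n =>
        scott_mono hf _ _ ((Set.subset_iUnion E n).trans Set.subset_union_left)
      -- f Y is infinite
      have hfY : ¬ (f Y).Finite := by
        intro hfin
        have hgrow : ∀ n, n ≤ (f (E n)).ncard := by
          intro n
          induction n with
          | zero => exact Nat.zero_le _
          | succ k ih =>
            exact Nat.succ_le_of_lt (lt_of_le_of_lt ih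
              (Set.ncard_lt_ncard (hstep k) (hfin.subset (hEY (k + 1)))))
        have hle : ∀ n, (f (E n)).ncard ≤ (f Y).ncard := fun n =>
          Set.ncard_le_ncard (hEY n) hfin
        have h1 := hgrow ((f Y).ncard + 1)
        have h2 := hle ((f Y).ncard + 1)
        omega
      -- contradiction
      have : f Y ∈ C := by
        have := hA ▸ hYmem; exact this
      exact hfY (hC this)
end
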